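/- For $n = 3$ and two vector variables, the following polynomial identity holds among polarized power sums: $6[x^2y]^2 + [xy]^2[x^2] - 3[xy]^2[x]^2 - 6[x^3][xy^2] + 2[x^2][xy^2][x] + 4[x^3][xy][y] - 2[x^2][xy][x][y] + 2[xy][x]^3[y] - 4[x^2y][x^2][y] - [x^2]^2[y^2] + [x^2]^2[y]^2 + 4[x^2][x]^2[y^2] - [x^2][x]^2[y]^2 - [x]^4[y^2] - 2[x^3][x][y^2] = 0$. -/
import Mathlib

open MvPolynomial

/-- `[x^a y^b] = ∑_{i=1}^3 x_i^a y_i^b` in `ℂ[x₁,x₂,x₃,y₁,y₂,y₃]`. -/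
noncomputable def br (a b : ℕ) : MvPolynomial (Fin 2 × Fin 3) ℂ :=
  ∑ i : Fin 3, X ((0 : Fin 2), i) ^ a * X ((1 : Fin 2), i) ^ b

/-- the relation `J_{4,2}` holds among polarized power sums. -/
theorem relation_J42 :
    6 * br 2 1 ^ 2 + br 1 1 ^ 2 * br 2 0 - 3 * br 1 1 ^ 2 * br 1 0 ^ 2
    - 6 * br 3 0 * br 1 2 + 2 * br 2 0 * br 1 2 * br 1 0
    + 4 * br 3 0 * br 1 1 * br 0 1 - 2 * br 2 0 * br 1 1 * br 1 0 * br 0 1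
    + 2 * br 1 1 * br 1 0 ^ 3 * br 0 1 - 4 * br 2 1 * br 2 0 * br 0 1
    - br 2 0 ^ 2 * br 0 2 + br 2 0 ^ 2 * br 0 1 ^ 2
    + 4 * br 2 0 * br 1 0 ^ 2 * br 0 2 - br 2 0 * br 1 0 ^ 2 * br 0 1 ^ 2
    - br 1 0 ^ 4 * br 0 2 - 2 * br 3 0 * br 1 0 * br 0 2 = 0 := by
  simp only [br, Fin.sum_univ_three]
  ring
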